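/- arXiv:2003.05977 — 2 statements merged into one kernel-verified Lean document; each statement's English description precedes it below -/
import Mathlib

section
/- Let V be a real inner product space with a subspace W, and let J : V → V satisfy J² = -I and ⟨JX,JY⟩ = ⟨X,Y⟩. Write JX = PX + FX for X ∈ W, where PX is the orthogonal projection of JX onto W and FX onto W⊥. If P² = -(cos²θ)·I on W for some real θ, then ⟨PX, PY⟩ = (cos²θ)⟨X, Y⟩ for all X, Y ∈ W. -/
open scoped RealInnerProductSpace

theorem stmt1 {V : Type*} [NormedAddCommGroup V] [InnerProductSpace ℝ V]
    (J : V →ₗ[ℝ] V) (hJ2 : ∀ x, J (J x) = -x)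
    (hJi : ∀ x y, ⟪J x, J y⟫ = ⟪x, y⟫)
    (W : Submodule ℝ V) (P : W →ₗ[ℝ] W) (F : W →ₗ[ℝ] Wᗮ)
    (hdec : ∀ x : W, J (x : V) = (P x : V) + (F x : V))
    (θ : ℝ) (hP2 : ∀ x : W, P (P x) = -(Real.cos θ ^ 2) • x) :
    ∀ x y : W, ⟪(P x : V), (P y : V)⟫ = Real.cos θ ^ 2 * ⟪(x : V), (y : V)⟫ := by
  intro x y
  have skew : ∀ a b : V, ⟪J a, b⟫ = -⟪a, J b⟫ := by
    intro a b
    have h := hJi a (J b)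
    rw [hJ2, inner_neg_right] at h
    linarith
  have h1 : ⟪(P x : V), (P y : V)⟫ = ⟪J (x : V), (P y : V)⟫ := by
    rw [hdec x, inner_add_left]
    have h0 : ⟪((F x : Wᗮ) : V), (P y : V)⟫ = 0 :=
      Submodule.inner_left_of_mem_orthogonal (P y).2 (F x).2
    rw [h0, add_zero]
  rw [h1, skew, hdec (P y)]
  have h2 : ⟪(x : V), ((F (P y) : Wᗮ) : V)⟫ = 0 :=
    Submodule.inner_right_of_mem_orthogonal x.2 (F (P y)).2
  rw [inner_add_right, h2, add_zero, hP2]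
  push_cast
  rw [inner_smul_right]
  ring
end

section
/- Let W be a real inner product space, θ real with sin θ ≠ 0, and suppose β : W × W → W is totally symmetric (⟨β(X,Y),Z⟩ = ⟨β(X,Z),Y⟩), P skew-adjoint with P² = -(cos²θ)I, and e₁ a unit vector with β(e₁,e₁) = μ₁e₁, β(e₁,eᵢ) = μᵢeᵢ for an orthonormal basis e₁,...,eₙ. If the identity ⟨β(X,Z),β(Y,PW)⟩ - ⟨β(X,PW),β(Y,Z)⟩ + ⟨β(X,W),Pβ(Y,Z)⟩ - ⟨β(Y,W),Pβ(X,Z)⟩ + (c/4)sin⁴θ(⟨X,PZ⟩⟨Y,W⟩ - ⟨Y,PZ⟩⟨X,W⟩ + 2⟨X,PY⟩⟨Z,W⟩) = 0 holds for all X,Y,Z,W, then for each i > 1: (μᵢ² + μ₁μᵢ + (3c/4)sin⁴θ)·⟨eᵢ, Pe₁⟩ = 0. -/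
open scoped RealInnerProductSpace

theorem stmt19 {E : Type*} [NormedAddCommGroup E] [InnerProductSpace ℝ E]
    (θ c : ℝ) (hθ : Real.sin θ ≠ 0)
    (P : E →ₗ[ℝ] E) (hskew : ∀ x y, ⟪P x, y⟫ = -⟪x, P y⟫)
    (hP2 : ∀ x, P (P x) = -(Real.cos θ ^ 2) • x)
    (β : E →ₗ[ℝ] E →ₗ[ℝ] E) (hsymm : ∀ x y, β x y = β y x)
    (htot : ∀ x y z, ⟪β x y, z⟫ = ⟪β x z, y⟫)
    {n : ℕ} [NeZero n] (e : Fin n → E) (hON : Orthonormal ℝ e)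
    (μ : Fin n → ℝ) (heig : ∀ i, β (e 0) (e i) = μ i • e i)
    (hmaster : ∀ X Y Z W : E,
      ⟪β X Z, β Y (P W)⟫ - ⟪β X (P W), β Y Z⟫ + ⟪β X W, P (β Y Z)⟫
        - ⟪β Y W, P (β X Z)⟫
        + (c / 4) * Real.sin θ ^ 4 * (⟪X, P Z⟫ * ⟪Y, W⟫
          - ⟪Y, P Z⟫ * ⟪X, W⟫ + 2 * ⟪X, P Y⟫ * ⟪Z, W⟫) = 0) :
    ∀ i : Fin n, i ≠ 0 →
      (μ i ^ 2 + μ 0 * μ i + (3 * c / 4) * Real.sin θ ^ 4) * ⟪e i, P (e 0)⟫ = 0 := by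
  intro i hi
  set A : ℝ := ⟪e i, P (e 0)⟫ with hA
  have hβi0 : β (e i) (e 0) = μ i • e i := by rw [hsymm, heig]
  have hβ00 : β (e 0) (e 0) = μ 0 • e 0 := heig 0
  have h6 : ⟪e i, e 0⟫ = (0 : ℝ) := hON.2 hi
  have h7 : ⟪e 0, e 0⟫ = (1 : ℝ) := by
    rw [real_inner_self_eq_norm_sq, hON.1 0]; norm_num
  have h5 : ⟪e 0, P (e 0)⟫ = (0 : ℝ) := by
    have := hskew (e 0) (e 0)
    rw [real_inner_comm] at this
    linarith
  have h8 : ⟪e 0, P (e i)⟫ = -A := by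
    rw [real_inner_comm]; exact hskew (e i) (e 0)
  have h1 : ⟪β (e 0) (e 0), β (e i) (P (e 0))⟫ = μ 0 * (μ i * A) := by
    rw [hβ00, real_inner_smul_left, real_inner_comm, htot, hβi0,
      real_inner_smul_left]
  have h2 : ⟪β (e 0) (P (e 0)), β (e i) (e 0)⟫ = μ i * (μ i * A) := by
    rw [hβi0, real_inner_smul_right, htot, heig, real_inner_smul_left]
  have h3 : ⟪β (e 0) (e 0), P (β (e i) (e 0))⟫ = μ 0 * (μ i * (-A)) := by
    rw [hβ00, hβi0, map_smul, real_inner_smul_left, real_inner_smul_right, h8]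
  have h4 : ⟪β (e i) (e 0), P (β (e 0) (e 0))⟫ = μ i * (μ 0 * A) := by
    rw [hβ00, hβi0, map_smul, real_inner_smul_left, real_inner_smul_right]
  have key := hmaster (e 0) (e i) (e 0) (e 0)
  rw [h1, h2, h3, h4, h5, h6, h7, h8] at key
  linarith [key, mul_self_nonneg A]
end
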